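/- arXiv:1608.04299 — 2 statements merged into one kernel-verified Lean document; each statement's English description precedes it below -/
import Mathlib

section
/- For every 0 ≤ ε < 1, the function p : ℝ⁴ → ℝ given by the ellipse Ptolemy ratio is differentiable at the point (0, π/2, π, 3π/2) and its gradient (total derivative) there is zero; that is, (0, π/2, π, 3π/2) is a critical point of p. -/
open Real

/-- The point `(cos θ, √(1 - ε²) · sin θ)` on the ellipse `x² + y²/(1-ε²) = 1`. -/
noncomputable def ellipsePoint (ε θ : ℝ) : EuclideanSpace ℝ (Fin 2) :=
  !₂[Real.cos θ, Real.sqrt (1 - ε ^ 2) * Real.sin θ]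

/-- The Ptolemy ratio of four points in the Euclidean plane. -/
noncomputable def ptolemyRatio (v₁ v₂ v₃ v₄ : EuclideanSpace ℝ (Fin 2)) : ℝ :=
  (‖v₁ - v₂‖ * ‖v₃ - v₄‖ + ‖v₁ - v₄‖ * ‖v₂ - v₃‖) / (‖v₁ - v₃‖ * ‖v₂ - v₄‖)

/-- The ellipse Ptolemy ratio as a function of the four angles, `p : ℝ⁴ → ℝ`. -/
noncomputable def ellipseRatioFun (ε : ℝ) : EuclideanSpace ℝ (Fin 4) → ℝ :=
  fun θ => ptolemyRatio (ellipsePoint ε (θ 0)) (ellipsePoint ε (θ 1))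
    (ellipsePoint ε (θ 2)) (ellipsePoint ε (θ 3))

noncomputable def Paux (i : Fin 4) : EuclideanSpace ℝ (Fin 4) →L[ℝ] ℝ := EuclideanSpace.proj i

/-- `p` is differentiable at `(0, π/2, π, 3π/2)` with total derivative (gradient) zero. -/
theorem stmt3 (ε : ℝ) (hε0 : 0 ≤ ε) (hε1 : ε < 1) :
    HasFDerivAt (ellipseRatioFun ε) (0 : EuclideanSpace ℝ (Fin 4) →L[ℝ] ℝ)
      (!₂[0, π / 2, π, 3 * π / 2] : EuclideanSpace ℝ (Fin 4)) := by
  have hb2 : (0:ℝ) < 1 - ε ^ 2 := by nlinarith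
  set c : ℝ := 1 - ε ^ 2 with hcdef
  set x : EuclideanSpace ℝ (Fin 4) := !₂[0, π / 2, π, 3 * π / 2] with hxdef
  have e0 : x 0 = 0 := rfl
  have e1 : x 1 = π / 2 := rfl
  have e2 : x 2 = π := rfl
  have e3 : x 3 = 3 * π / 2 := rfl
  have hc3 : Real.cos (3 * π / 2) = 0 := by
    rw [show (3*π/2 : ℝ) = π + π/2 by ring, Real.cos_add]; simp
  have hs3 : Real.sin (3 * π / 2) = -1 := by
    rw [show (3*π/2 : ℝ) = π + π/2 by ring, Real.sin_add]; simp
  -- basic derivative builders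
  have hcos : ∀ i : Fin 4, HasFDerivAt (fun θ : EuclideanSpace ℝ (Fin 4) => Real.cos (θ i))
      ((-Real.sin (x i)) • Paux i) x := fun i =>
    (Real.hasDerivAt_cos (x i)).comp_hasFDerivAt (h₂ := Real.cos) x (Paux i).hasFDerivAt
  have hsin : ∀ i : Fin 4, HasFDerivAt (fun θ : EuclideanSpace ℝ (Fin 4) => Real.sin (θ i))
      ((Real.cos (x i)) • Paux i) x := fun i =>
    (Real.hasDerivAt_sin (x i)).comp_hasFDerivAt (h₂ := Real.sin) x (Paux i).hasFDerivAt
  have hq : ∀ i j : Fin 4, HasFDerivAt (fun θ : EuclideanSpace ℝ (Fin 4) =>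
      (Real.cos (θ i) - Real.cos (θ j)) * (Real.cos (θ i) - Real.cos (θ j)) +
        c * ((Real.sin (θ i) - Real.sin (θ j)) * (Real.sin (θ i) - Real.sin (θ j))))
      (((Real.cos (x i) - Real.cos (x j)) • (((-Real.sin (x i)) • Paux i) - ((-Real.sin (x j)) • Paux j))
        + (Real.cos (x i) - Real.cos (x j)) • (((-Real.sin (x i)) • Paux i) - ((-Real.sin (x j)) • Paux j)))
       + c • ((Real.sin (x i) - Real.sin (x j)) • (((Real.cos (x i)) • Paux i) - ((Real.cos (x j)) • Paux j))
        + (Real.sin (x i) - Real.sin (x j)) • (((Real.cos (x i)) • Paux i) - ((Real.cos (x j)) • Paux j)))) x := by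
    intro i j
    exact (((hcos i).sub (hcos j)).mul ((hcos i).sub (hcos j))).add
      ((((hsin i).sub (hsin j)).mul (((hsin i).sub (hsin j)))).const_mul c)
  -- values of q at the point
  have v01 : (Real.cos (x 0) - Real.cos (x 1)) * (Real.cos (x 0) - Real.cos (x 1)) +
      c * ((Real.sin (x 0) - Real.sin (x 1)) * (Real.sin (x 0) - Real.sin (x 1))) = 1 + c := by
    rw [e0, e1]; simp; try ring
  have v23 : (Real.cos (x 2) - Real.cos (x 3)) * (Real.cos (x 2) - Real.cos (x 3)) +
      c * ((Real.sin (x 2) - Real.sin (x 3)) * (Real.sin (x 2) - Real.sin (x 3))) = 1 + c := by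
    rw [e2, e3]; simp [hc3, hs3]; try ring
  have v03 : (Real.cos (x 0) - Real.cos (x 3)) * (Real.cos (x 0) - Real.cos (x 3)) +
      c * ((Real.sin (x 0) - Real.sin (x 3)) * (Real.sin (x 0) - Real.sin (x 3))) = 1 + c := by
    rw [e0, e3]; simp [hc3, hs3]; try ring
  have v12 : (Real.cos (x 1) - Real.cos (x 2)) * (Real.cos (x 1) - Real.cos (x 2)) +
      c * ((Real.sin (x 1) - Real.sin (x 2)) * (Real.sin (x 1) - Real.sin (x 2))) = 1 + c := by
    rw [e1, e2]; simp; try ring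
  have v02 : (Real.cos (x 0) - Real.cos (x 2)) * (Real.cos (x 0) - Real.cos (x 2)) +
      c * ((Real.sin (x 0) - Real.sin (x 2)) * (Real.sin (x 0) - Real.sin (x 2))) = 4 := by
    rw [e0, e2]; simp; try ring
  have v13 : (Real.cos (x 1) - Real.cos (x 3)) * (Real.cos (x 1) - Real.cos (x 3)) +
      c * ((Real.sin (x 1) - Real.sin (x 3)) * (Real.sin (x 1) - Real.sin (x 3))) = 4 * c := by
    rw [e1, e3]; simp [hc3, hs3]; try ring
  have h1c : (0:ℝ) < 1 + c := by linarith
  have h4c : (0:ℝ) < 4 * c := by linarith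
  -- sqrt compositions
  have hs01 := (Real.hasDerivAt_sqrt (by rw [v01]; positivity)).comp_hasFDerivAt x (hq 0 1)
  have hs23 := (Real.hasDerivAt_sqrt (by rw [v23]; positivity)).comp_hasFDerivAt x (hq 2 3)
  have hs03 := (Real.hasDerivAt_sqrt (by rw [v03]; positivity)).comp_hasFDerivAt x (hq 0 3)
  have hs12 := (Real.hasDerivAt_sqrt (by rw [v12]; positivity)).comp_hasFDerivAt x (hq 1 2)
  have hs02 := (Real.hasDerivAt_sqrt (by rw [v02]; positivity)).comp_hasFDerivAt x (hq 0 2)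
  have hs13 := (Real.hasDerivAt_sqrt (by rw [v13]; positivity)).comp_hasFDerivAt x (hq 1 3)
  have hden : Real.sqrt ((Real.cos (x 0) - Real.cos (x 2)) * (Real.cos (x 0) - Real.cos (x 2)) +
      c * ((Real.sin (x 0) - Real.sin (x 2)) * (Real.sin (x 0) - Real.sin (x 2)))) *
      Real.sqrt ((Real.cos (x 1) - Real.cos (x 3)) * (Real.cos (x 1) - Real.cos (x 3)) +
      c * ((Real.sin (x 1) - Real.sin (x 3)) * (Real.sin (x 1) - Real.sin (x 3)))) ≠ 0 := by
    rw [v02, v13]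
    positivity
  have hinv := (hasDerivAt_inv hden).comp_hasFDerivAt x (hs02.mul hs13)
  have H := ((hs01.mul hs23).add (hs03.mul hs12)).mul hinv
  have hnorm : ∀ α β : ℝ, ‖ellipsePoint ε α - ellipsePoint ε β‖ =
      Real.sqrt ((Real.cos α - Real.cos β) * (Real.cos α - Real.cos β) +
        c * ((Real.sin α - Real.sin β) * (Real.sin α - Real.sin β))) := by
    intro α β
    rw [EuclideanSpace.norm_eq]
    congr 1
    rw [Fin.sum_univ_two]
    simp only [ellipsePoint, PiLp.sub_apply, Matrix.cons_val_zero, Matrix.cons_val_one,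
      Matrix.head_cons, Real.norm_eq_abs, sq_abs]
    have h : Real.sqrt (1 - ε ^ 2) * Real.sin α - Real.sqrt (1 - ε ^ 2) * Real.sin β =
        Real.sqrt (1 - ε ^ 2) * (Real.sin α - Real.sin β) := by ring
    rw [h, mul_pow, Real.sq_sqrt (by linarith)]
    ring
  have H' := H.congr_of_eventuallyEq (Filter.Eventually.of_forall fun θ => by
    show ellipseRatioFun ε θ = _
    simp only [ellipseRatioFun, ptolemyRatio, hnorm, Function.comp_apply, div_eq_mul_inv, Pi.mul_apply, Pi.add_apply])
  refine H'.congr_fderiv ?_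
  refine ContinuousLinearMap.ext fun v => ?_
  simp only [Function.comp_apply]
  rw [v01, v23, v03, v12, v02, v13]
  simp only [ContinuousLinearMap.add_apply, ContinuousLinearMap.smul_apply,
    ContinuousLinearMap.sub_apply, ContinuousLinearMap.zero_apply, smul_eq_mul,
    ContinuousLinearMap.coe_smul', Pi.smul_apply, e0, e1, e2, e3, Real.cos_zero, Real.sin_zero,
    Real.cos_pi, Real.sin_pi, Real.cos_pi_div_two, Real.sin_pi_div_two, hc3, hs3]
  ring
end

section
/- For every 0 < ε < 1, the ellipse Ptolemy ratio p : ℝ⁴ → ℝ has a local maximum at the point (0, π/2, π, 3π/2): there is a neighborhood U of (0, π/2, π, 3π/2) in ℝ⁴ such that p(θ) ≤ p(0, π/2, π, 3π/2) = (2 − ε²)/(2√(1 − ε²)) for all θ ∈ U. -/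
open Real

lemma normsq_aux (ε a b : ℝ) (h : ε^2 ≤ 1) :
    ‖ellipsePoint ε a - ellipsePoint ε b‖^2
      = 4 * sin ((a-b)/2)^2 * (1 - ε^2 * cos ((a+b)/2)^2) := by
  have : ‖ellipsePoint ε a - ellipsePoint ε b‖^2
      = (cos a - cos b)^2 + (Real.sqrt (1-ε^2))^2 * (sin a - sin b)^2 := by
    rw [@EuclideanSpace.norm_eq]
    rw [Real.sq_sqrt (by positivity)]
    simp [ellipsePoint, Fin.sum_univ_two]
    ring
  rw [this, Real.sq_sqrt (by linarith), Real.cos_sub_cos, Real.sin_sub_sin]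
  linear_combination (4 * sin ((a-b)/2)^2) * (Real.sin_sq_add_cos_sq ((a+b)/2))

lemma norm_eq_aux (ε a b : ℝ) (h : ε^2 ≤ 1) :
    ‖ellipsePoint ε a - ellipsePoint ε b‖
      = Real.sqrt (4 * sin ((a-b)/2)^2 * (1 - ε^2 * cos ((a+b)/2)^2)) := by
  rw [← normsq_aux ε a b h, Real.sqrt_sq (norm_nonneg _)]

lemma F_prod_aux (m σ1 σ2 : ℝ) :
    (1 - 2*m*cos σ1^2) * (1 - 2*m*cos σ2^2)
      = (1-2*m) * (1 - cos (σ1+σ2)^2)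
        + (m * cos (σ1-σ2) - (1-m) * cos (σ1+σ2))^2 := by
  rw [Real.cos_add, Real.cos_sub]
  linear_combination (-2*m*sin σ2^2) * Real.sin_sq_add_cos_sq σ1
    + (2*m*cos σ1^2 - 2*m) * Real.sin_sq_add_cos_sq σ2

/-- product of two chord lengths of the ellipse -/
lemma prod_norm_aux (ε : ℝ) (hε0 : 0 ≤ ε) (hε1 : ε ≤ 1) (a b c d : ℝ)
    (h : cos ((a-b)/2 + (c-d)/2) ≤ cos ((a-b)/2 - (c-d)/2)) :
    ‖ellipsePoint ε a - ellipsePoint ε b‖ * ‖ellipsePoint ε c - ellipsePoint ε d‖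
      = 2 * (cos ((a-b)/2 - (c-d)/2) - cos ((a-b)/2 + (c-d)/2)) *
        Real.sqrt ((1-ε^2) * (1 - cos ((a+b)/2 + (c+d)/2)^2)
          + ((ε^2/2) * cos ((a+b)/2 - (c+d)/2) - (1-ε^2/2) * cos ((a+b)/2 + (c+d)/2))^2) := by
  have hε2 : ε^2 ≤ 1 := by nlinarith
  have hm : (0:ℝ) ≤ ε^2/2 := by positivity
  have hE : (1-ε^2) * (1 - cos ((a+b)/2 + (c+d)/2)^2)
          + ((ε^2/2) * cos ((a+b)/2 - (c+d)/2) - (1-ε^2/2) * cos ((a+b)/2 + (c+d)/2))^2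
      = (1 - ε^2 * cos ((a+b)/2)^2) * (1 - ε^2 * cos ((c+d)/2)^2) := by
    have := F_prod_aux (ε^2/2) ((a+b)/2) ((c+d)/2)
    linear_combination -this
  have hF1 : (0:ℝ) ≤ 1 - ε^2 * cos ((a+b)/2)^2 := by nlinarith [cos_sq_le_one ((a+b)/2)]
  have hF2 : (0:ℝ) ≤ 1 - ε^2 * cos ((c+d)/2)^2 := by nlinarith [cos_sq_le_one ((c+d)/2)]
  have hsin : sin ((a-b)/2) * sin ((c-d)/2)
      = (cos ((a-b)/2 - (c-d)/2) - cos ((a-b)/2 + (c-d)/2))/2 := by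
    rw [Real.cos_sub, Real.cos_add]; ring
  have hL : (0:ℝ) ≤ ‖ellipsePoint ε a - ellipsePoint ε b‖ * ‖ellipsePoint ε c - ellipsePoint ε d‖ :=
    mul_nonneg (norm_nonneg _) (norm_nonneg _)
  have hR : (0:ℝ) ≤ 2 * (cos ((a-b)/2 - (c-d)/2) - cos ((a-b)/2 + (c-d)/2)) *
      Real.sqrt ((1-ε^2) * (1 - cos ((a+b)/2 + (c+d)/2)^2)
          + ((ε^2/2) * cos ((a+b)/2 - (c+d)/2) - (1-ε^2/2) * cos ((a+b)/2 + (c+d)/2))^2) :=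
    mul_nonneg (by linarith) (Real.sqrt_nonneg _)
  have hsq : (‖ellipsePoint ε a - ellipsePoint ε b‖ * ‖ellipsePoint ε c - ellipsePoint ε d‖)^2
      = (2 * (cos ((a-b)/2 - (c-d)/2) - cos ((a-b)/2 + (c-d)/2)) *
        Real.sqrt ((1-ε^2) * (1 - cos ((a+b)/2 + (c+d)/2)^2)
          + ((ε^2/2) * cos ((a+b)/2 - (c+d)/2) - (1-ε^2/2) * cos ((a+b)/2 + (c+d)/2))^2))^2 := by
    rw [mul_pow, mul_pow, Real.sq_sqrt (by rw [hE]; positivity), normsq_aux ε a b hε2,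
      normsq_aux ε c d hε2, hE]
    linear_combination (16 * (1 - ε ^ 2 * cos ((a+b)/2) ^ 2) * (1 - ε ^ 2 * cos ((c+d)/2) ^ 2)
      * (sin ((a-b)/2) * sin ((c-d)/2)
        + (cos ((a-b)/2 - (c-d)/2) - cos ((a-b)/2 + (c-d)/2))/2)) * hsin
  calc ‖ellipsePoint ε a - ellipsePoint ε b‖ * ‖ellipsePoint ε c - ellipsePoint ε d‖
      = Real.sqrt ((‖ellipsePoint ε a - ellipsePoint ε b‖ * ‖ellipsePoint ε c - ellipsePoint ε d‖)^2) :=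
        (Real.sqrt_sq hL).symm
    _ = _ := by rw [hsq, Real.sqrt_sq hR]

lemma g_le_aux (m t w : ℝ) (hm : 0 < m) (hm2 : m < 1/2) (hw1 : -1 ≤ w) (hw2 : w ≤ 1)
    (ht : t^2 ≤ 1) :
    Real.sqrt ((1-2*m)*(1-t^2) + (m*w-(1-m)*t)^2) ≤ (1-m) - m*t*w := by
  have h1 : (0:ℝ) ≤ 1 - t^2 := by linarith
  have h2 : (0:ℝ) ≤ 1 - w^2 := by nlinarith
  have htw : t*w ≤ 1 := by nlinarith [sq_nonneg (t-w), sq_nonneg (t+w)]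
  have hK : (0:ℝ) ≤ (1-m) - m*t*w := by nlinarith
  have hle : (1-2*m)*(1-t^2) + (m*w-(1-m)*t)^2 ≤ ((1-m) - m*t*w)^2 := by
    nlinarith [mul_nonneg (mul_nonneg (sq_nonneg m) h1) h2]
  calc Real.sqrt ((1-2*m)*(1-t^2) + (m*w-(1-m)*t)^2) ≤ Real.sqrt (((1-m) - m*t*w)^2) :=
        Real.sqrt_le_sqrt hle
    _ = (1-m) - m*t*w := Real.sqrt_sq hK

lemma key2_aux (m t y : ℝ) (hm : 0 < m) (hm2 : m < 1/2) (hy1 : -1 ≤ y) (hy2 : y ≤ 1)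
    (ht : t^2 ≤ 1) :
    Real.sqrt (1-2*m) * ((1-m) - m*t*y)
      ≤ (1-m) * Real.sqrt ((1-2*m)*(1-t^2) + (m*y-(1-m)*t)^2) := by
  have hB2 : (Real.sqrt (1-2*m))^2 = 1-2*m := Real.sq_sqrt (by linarith)
  have h1 : (0:ℝ) ≤ 1 - t^2 := by linarith
  have hE : (0:ℝ) ≤ (1-2*m)*(1-t^2) + (m*y-(1-m)*t)^2 :=
    add_nonneg (mul_nonneg (by linarith) h1) (sq_nonneg _)
  have hy2' : y^2 ≤ 1 := by nlinarith
  have hty1 : t*y ≤ 1 := by nlinarith [sq_nonneg (t-y)]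
  have hty1' : -(t*y) ≤ 1 := by nlinarith [sq_nonneg (t+y)]
  have hK : (0:ℝ) ≤ (1-m) - m*t*y := by nlinarith
  have hL : (0:ℝ) ≤ Real.sqrt (1-2*m) * ((1-m) - m*t*y) :=
    mul_nonneg (Real.sqrt_nonneg _) hK
  have hcore : 0 ≤ (1-m)^2*t^2 + (1-m)^2*y^2 - 2*(1-m)*m*(t*y) - (1-2*m)*t^2*y^2 := by
    rcases le_or_gt 0 (t*y) with hty | hty
    · nlinarith [mul_nonneg (sq_nonneg (1-m)) (sq_nonneg (t-y)),
        mul_nonneg (mul_nonneg (by linarith : (0:ℝ) ≤ 1-2*m) hty)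
          (by linarith : (0:ℝ) ≤ 2*(1-m) - t*y)]
    · nlinarith [mul_nonneg (sq_nonneg (1-m)) (sq_nonneg (t+y)),
        mul_nonneg (mul_nonneg (by linarith : (0:ℝ) ≤ 1-2*m)
          (by linarith : (0:ℝ) ≤ -(t*y))) (by linarith : (0:ℝ) ≤ 1 + t*y)]
  have hsq : (Real.sqrt (1-2*m) * ((1-m) - m*t*y))^2
      ≤ ((1-m) * Real.sqrt ((1-2*m)*(1-t^2) + (m*y-(1-m)*t)^2))^2 := by
    rw [mul_pow, mul_pow, hB2, Real.sq_sqrt hE]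
    nlinarith [mul_nonneg (sq_nonneg m) hcore]
  calc Real.sqrt (1-2*m) * ((1-m) - m*t*y)
      = Real.sqrt ((Real.sqrt (1-2*m) * ((1-m) - m*t*y))^2) := (Real.sqrt_sq hL).symm
    _ ≤ Real.sqrt (((1-m) * Real.sqrt ((1-2*m)*(1-t^2) + (m*y-(1-m)*t)^2))^2) :=
        Real.sqrt_le_sqrt hsq
    _ = _ := Real.sqrt_sq (mul_nonneg (by linarith) (Real.sqrt_nonneg _))

lemma main_ineq_aux (m t x y z : ℝ) (hm : 0 < m) (hm2 : m < 1/2)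
    (hx1 : -1 ≤ x) (hz1 : z ≤ 1) (hxy : x ≤ y) (hyz : y ≤ z) (ht : t^2 ≤ 1) :
    Real.sqrt (1-2*m) * ((z-y) * Real.sqrt ((1-2*m)*(1-t^2) + (m*x-(1-m)*t)^2)
      + (y-x) * Real.sqrt ((1-2*m)*(1-t^2) + (m*z-(1-m)*t)^2))
      ≤ (1-m) * ((z-x) * Real.sqrt ((1-2*m)*(1-t^2) + (m*y-(1-m)*t)^2)) := by
  have hB : (0:ℝ) ≤ Real.sqrt (1-2*m) := Real.sqrt_nonneg _
  have g1 := g_le_aux m t x hm hm2 hx1 (by linarith) ht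
  have g2 := g_le_aux m t z hm hm2 (by linarith) hz1 ht
  have k2 := key2_aux m t y hm hm2 (by linarith) (by linarith) ht
  have step1 : (z-y) * Real.sqrt ((1-2*m)*(1-t^2) + (m*x-(1-m)*t)^2)
      + (y-x) * Real.sqrt ((1-2*m)*(1-t^2) + (m*z-(1-m)*t)^2)
      ≤ (z-x) * ((1-m) - m*t*y) := by
    nlinarith [mul_le_mul_of_nonneg_left g1 (by linarith : (0:ℝ) ≤ z-y),
      mul_le_mul_of_nonneg_left g2 (by linarith : (0:ℝ) ≤ y-x)]
  calc Real.sqrt (1-2*m) * ((z-y) * Real.sqrt ((1-2*m)*(1-t^2) + (m*x-(1-m)*t)^2)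
      + (y-x) * Real.sqrt ((1-2*m)*(1-t^2) + (m*z-(1-m)*t)^2))
      ≤ Real.sqrt (1-2*m) * ((z-x) * ((1-m) - m*t*y)) :=
        mul_le_mul_of_nonneg_left step1 hB
    _ = (z-x) * (Real.sqrt (1-2*m) * ((1-m) - m*t*y)) := by ring
    _ ≤ (z-x) * ((1-m) * Real.sqrt ((1-2*m)*(1-t^2) + (m*y-(1-m)*t)^2)) :=
        mul_le_mul_of_nonneg_left k2 (by linarith)
    _ = _ := by ring

set_option maxHeartbeats 1000000 in
lemma main_bound_aux (ε : ℝ) (hε0 : 0 < ε) (hε1 : ε < 1) (θ : EuclideanSpace ℝ (Fin 4))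
    (h1 : cos ((θ 0 + θ 1 - θ 2 - θ 3)/2) ≤ cos ((θ 0 + θ 2 - θ 1 - θ 3)/2))
    (h2 : cos ((θ 0 + θ 2 - θ 1 - θ 3)/2) ≤ cos ((θ 0 + θ 3 - θ 1 - θ 2)/2))
    (h3 : cos ((θ 0 + θ 1 - θ 2 - θ 3)/2) < 0)
    (h4 : 0 < cos ((θ 0 + θ 3 - θ 1 - θ 2)/2))
    (h5 : cos ((θ 0 + θ 1 + θ 2 + θ 3)/2)^2 < 1/2) :
    ellipseRatioFun ε θ ≤ (2 - ε^2)/(2*Real.sqrt (1-ε^2)) := by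
  have hε2 : ε^2 < 1 := by nlinarith
  set x := cos ((θ 0 + θ 1 - θ 2 - θ 3)/2) with hxdef
  set y := cos ((θ 0 + θ 2 - θ 1 - θ 3)/2) with hydef
  set z := cos ((θ 0 + θ 3 - θ 1 - θ 2)/2) with hzdef
  set t := cos ((θ 0 + θ 1 + θ 2 + θ 3)/2) with htdef
  -- the three products of norms
  have hP1 : ‖ellipsePoint ε (θ 0) - ellipsePoint ε (θ 1)‖ *
      ‖ellipsePoint ε (θ 2) - ellipsePoint ε (θ 3)‖
      = 2 * (z - y) * Real.sqrt ((1-ε^2) * (1 - t^2)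
          + ((ε^2/2) * x - (1-ε^2/2) * t)^2) := by
    have e1 : (θ 0 - θ 1)/2 + (θ 2 - θ 3)/2 = (θ 0 + θ 2 - θ 1 - θ 3)/2 := by ring
    have e2 : (θ 0 - θ 1)/2 - (θ 2 - θ 3)/2 = (θ 0 + θ 3 - θ 1 - θ 2)/2 := by ring
    have e3 : (θ 0 + θ 1)/2 + (θ 2 + θ 3)/2 = (θ 0 + θ 1 + θ 2 + θ 3)/2 := by ring
    have e4 : (θ 0 + θ 1)/2 - (θ 2 + θ 3)/2 = (θ 0 + θ 1 - θ 2 - θ 3)/2 := by ring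
    have := prod_norm_aux ε hε0.le hε1.le (θ 0) (θ 1) (θ 2) (θ 3)
      (by rw [e1, e2]; exact h2)
    rw [e1, e2, e3, e4] at this
    exact this
  have hP2 : ‖ellipsePoint ε (θ 0) - ellipsePoint ε (θ 3)‖ *
      ‖ellipsePoint ε (θ 1) - ellipsePoint ε (θ 2)‖
      = 2 * (y - x) * Real.sqrt ((1-ε^2) * (1 - t^2)
          + ((ε^2/2) * z - (1-ε^2/2) * t)^2) := by
    have e1 : (θ 0 - θ 3)/2 + (θ 1 - θ 2)/2 = (θ 0 + θ 1 - θ 2 - θ 3)/2 := by ring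
    have e2 : (θ 0 - θ 3)/2 - (θ 1 - θ 2)/2 = (θ 0 + θ 2 - θ 1 - θ 3)/2 := by ring
    have e3 : (θ 0 + θ 3)/2 + (θ 1 + θ 2)/2 = (θ 0 + θ 1 + θ 2 + θ 3)/2 := by ring
    have e4 : (θ 0 + θ 3)/2 - (θ 1 + θ 2)/2 = (θ 0 + θ 3 - θ 1 - θ 2)/2 := by ring
    have := prod_norm_aux ε hε0.le hε1.le (θ 0) (θ 3) (θ 1) (θ 2)
      (by rw [e1, e2]; exact h1)
    rw [e1, e2, e3, e4] at this
    exact this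
  have hD : ‖ellipsePoint ε (θ 0) - ellipsePoint ε (θ 2)‖ *
      ‖ellipsePoint ε (θ 1) - ellipsePoint ε (θ 3)‖
      = 2 * (z - x) * Real.sqrt ((1-ε^2) * (1 - t^2)
          + ((ε^2/2) * y - (1-ε^2/2) * t)^2) := by
    have e1 : (θ 0 - θ 2)/2 + (θ 1 - θ 3)/2 = (θ 0 + θ 1 - θ 2 - θ 3)/2 := by ring
    have e2 : (θ 0 - θ 2)/2 - (θ 1 - θ 3)/2 = (θ 0 + θ 3 - θ 1 - θ 2)/2 := by ring
    have e3 : (θ 0 + θ 2)/2 + (θ 1 + θ 3)/2 = (θ 0 + θ 1 + θ 2 + θ 3)/2 := by ring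
    have e4 : (θ 0 + θ 2)/2 - (θ 1 + θ 3)/2 = (θ 0 + θ 2 - θ 1 - θ 3)/2 := by ring
    have := prod_norm_aux ε hε0.le hε1.le (θ 0) (θ 2) (θ 1) (θ 3)
      (by rw [e1, e2]; exact h1.trans h2)
    rw [e1, e2, e3, e4] at this
    exact this
  have hB : (0:ℝ) < Real.sqrt (1-ε^2) := Real.sqrt_pos.2 (by linarith)
  have ht1 : t^2 ≤ 1 := cos_sq_le_one _
  have hgy : (0:ℝ) < Real.sqrt ((1-ε^2) * (1 - t^2) + ((ε^2/2) * y - (1-ε^2/2) * t)^2) := by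
    apply Real.sqrt_pos.2
    have : (0:ℝ) < (1-ε^2) * (1 - t^2) := by nlinarith
    nlinarith [sq_nonneg ((ε^2/2) * y - (1-ε^2/2) * t)]
  have hDpos : (0:ℝ) < 2 * (z - x) *
      Real.sqrt ((1-ε^2) * (1 - t^2) + ((ε^2/2) * y - (1-ε^2/2) * t)^2) := by
    apply mul_pos (by linarith) hgy
  rw [ellipseRatioFun]
  rw [ptolemyRatio, hP1, hP2, hD, div_le_iff₀ hDpos]
  -- use the main inequality with m = ε^2/2
  have key := main_ineq_aux (ε^2/2) t x y z (by positivity) (by nlinarith)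
    (neg_one_le_cos _) (cos_le_one _) h1 h2 ht1
  have h12 : 1 - 2*(ε^2/2) = 1 - ε^2 := by ring
  rw [h12] at key
  have hBne : Real.sqrt (1-ε^2) ≠ 0 := ne_of_gt hB
  rw [← mul_le_mul_iff_right₀ hB]
  calc Real.sqrt (1-ε^2) * (2 * (z - y) * Real.sqrt ((1-ε^2) * (1 - t^2)
          + (ε^2/2 * x - (1-ε^2/2) * t)^2)
        + 2 * (y - x) * Real.sqrt ((1-ε^2) * (1 - t^2)
          + (ε^2/2 * z - (1-ε^2/2) * t)^2))
      = 2 * (Real.sqrt (1-ε^2) * ((z - y) * Real.sqrt ((1-ε^2) * (1 - t^2)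
          + (ε^2/2 * x - (1-ε^2/2) * t)^2)
        + (y - x) * Real.sqrt ((1-ε^2) * (1 - t^2)
          + (ε^2/2 * z - (1-ε^2/2) * t)^2))) := by ring
    _ ≤ 2 * ((1-ε^2/2) * ((z - x) * Real.sqrt ((1-ε^2) * (1 - t^2)
          + (ε^2/2 * y - (1-ε^2/2) * t)^2))) := by linarith
    _ = Real.sqrt (1-ε^2) * ((2 - ε^2)/(2*Real.sqrt (1-ε^2)) * (2 * (z - x) *
          Real.sqrt ((1-ε^2) * (1 - t^2) + (ε^2/2 * y - (1-ε^2/2) * t)^2))) := by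
        field_simp

lemma cos_3pi2 : Real.cos (3 * π / 2) = 0 := by
  rw [show (3 * π / 2) = π + π/2 by ring, Real.cos_add]
  simp

lemma sin_3pi2 : Real.sin (3 * π / 2) = -1 := by
  rw [show (3 * π / 2) = π + π/2 by ring, Real.sin_add]
  simp

lemma value_aux (ε : ℝ) (hε0 : 0 < ε) (hε1 : ε < 1) :
    ellipseRatioFun ε (!₂[0, π / 2, π, 3 * π / 2] : EuclideanSpace ℝ (Fin 4)) =
      (2 - ε ^ 2) / (2 * Real.sqrt (1 - ε ^ 2)) := by
  have hε2 : ε^2 ≤ 1 := by nlinarith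
  have h2' : ((Real.sqrt 2)/2)^2 = 1/2 := by
    rw [div_pow, Real.sq_sqrt (by norm_num)]; norm_num
  have hθ0 : (!₂[0, π / 2, π, 3 * π / 2] : EuclideanSpace ℝ (Fin 4)) 0 = 0 := rfl
  have hθ1 : (!₂[0, π / 2, π, 3 * π / 2] : EuclideanSpace ℝ (Fin 4)) 1 = π/2 := rfl
  have hθ2 : (!₂[0, π / 2, π, 3 * π / 2] : EuclideanSpace ℝ (Fin 4)) 2 = π := rfl
  have hθ3 : (!₂[0, π / 2, π, 3 * π / 2] : EuclideanSpace ℝ (Fin 4)) 3 = 3*π/2 := rfl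
  rw [ellipseRatioFun, hθ0, hθ1, hθ2, hθ3, ptolemyRatio]
  have n01 : ‖ellipsePoint ε 0 - ellipsePoint ε (π/2)‖ = Real.sqrt (2 - ε^2) := by
    rw [norm_eq_aux ε _ _ hε2]
    congr 1
    rw [show ((0:ℝ) - π/2)/2 = -(π/4) by ring, show ((0:ℝ) + π/2)/2 = π/4 by ring,
      Real.sin_neg, Real.sin_pi_div_four, Real.cos_pi_div_four]
    linear_combination (-4*ε^2*((Real.sqrt 2/2)^2) - 2*ε^2 + 4) * h2'
  have n23 : ‖ellipsePoint ε π - ellipsePoint ε (3*π/2)‖ = Real.sqrt (2 - ε^2) := by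
    rw [norm_eq_aux ε _ _ hε2]
    congr 1
    rw [show (π - 3*π/2)/2 = -(π/4) by ring, show (π + 3*π/2)/2 = π + π/4 by ring,
      Real.sin_neg, Real.sin_pi_div_four, Real.cos_add, Real.cos_pi, Real.sin_pi,
      Real.cos_pi_div_four, Real.sin_pi_div_four]
    linear_combination (-4*ε^2*((Real.sqrt 2/2)^2) - 2*ε^2 + 4) * h2'
  have n03 : ‖ellipsePoint ε 0 - ellipsePoint ε (3*π/2)‖ = Real.sqrt (2 - ε^2) := by
    rw [norm_eq_aux ε _ _ hε2]
    congr 1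
    rw [show ((0:ℝ) - 3*π/2)/2 = -(π - π/4) by ring, show ((0:ℝ) + 3*π/2)/2 = π - π/4 by ring,
      Real.sin_neg, Real.sin_pi_sub, Real.sin_pi_div_four, Real.cos_pi_sub,
      Real.cos_pi_div_four]
    linear_combination (-4*ε^2*((Real.sqrt 2/2)^2) - 2*ε^2 + 4) * h2'
  have n12 : ‖ellipsePoint ε (π/2) - ellipsePoint ε π‖ = Real.sqrt (2 - ε^2) := by
    rw [norm_eq_aux ε _ _ hε2]
    congr 1
    rw [show (π/2 - π)/2 = -(π/4) by ring, show (π/2 + π)/2 = π - π/4 by ring,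
      Real.sin_neg, Real.sin_pi_div_four, Real.cos_pi_sub, Real.cos_pi_div_four]
    linear_combination (-4*ε^2*((Real.sqrt 2/2)^2) - 2*ε^2 + 4) * h2'
  have n02 : ‖ellipsePoint ε 0 - ellipsePoint ε π‖ = 2 := by
    rw [norm_eq_aux ε _ _ hε2]
    rw [show ((0:ℝ) - π)/2 = -(π/2) by ring, show ((0:ℝ) + π)/2 = π/2 by ring,
      Real.sin_neg, Real.sin_pi_div_two, Real.cos_pi_div_two]
    rw [show (4:ℝ) * (-1:ℝ)^2 * (1 - ε^2*0^2) = 2^2 by ring, Real.sqrt_sq (by norm_num)]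
  have n13 : ‖ellipsePoint ε (π/2) - ellipsePoint ε (3*π/2)‖ = 2 * Real.sqrt (1 - ε^2) := by
    rw [norm_eq_aux ε _ _ hε2]
    rw [show (π/2 - 3*π/2)/2 = -(π/2) by ring, show (π/2 + 3*π/2)/2 = π by ring,
      Real.sin_neg, Real.sin_pi_div_two, Real.cos_pi]
    rw [show (4:ℝ) * (-1:ℝ)^2 * (1 - ε^2*(-1:ℝ)^2) = 2^2 * (1 - ε^2) by ring,
      Real.sqrt_mul (by norm_num), Real.sqrt_sq (by norm_num)]
  rw [n01, n23, n03, n12, n02, n13, Real.mul_self_sqrt (by nlinarith)]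
  have hB : (0:ℝ) < Real.sqrt (1-ε^2) := Real.sqrt_pos.2 (by nlinarith)
  field_simp
  ring

/-- `p` has a local maximum at `(0, π/2, π, 3π/2)`, with value `(2-ε²)/(2√(1-ε²))`. -/
theorem stmt6 (ε : ℝ) (hε0 : 0 < ε) (hε1 : ε < 1) :
    IsLocalMax (ellipseRatioFun ε)
        (!₂[0, π / 2, π, 3 * π / 2] : EuclideanSpace ℝ (Fin 4)) ∧
      ellipseRatioFun ε (!₂[0, π / 2, π, 3 * π / 2] : EuclideanSpace ℝ (Fin 4)) =
        (2 - ε ^ 2) / (2 * Real.sqrt (1 - ε ^ 2)) := by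
  have hval := value_aux ε hε0 hε1
  refine ⟨?_, hval⟩
  set θ₀ : EuclideanSpace ℝ (Fin 4) := !₂[0, π / 2, π, 3 * π / 2] with hθ₀
  have hθ0 : θ₀ 0 = 0 := rfl
  have hθ1 : θ₀ 1 = π/2 := rfl
  have hθ2 : θ₀ 2 = π := rfl
  have hθ3 : θ₀ 3 = 3*π/2 := rfl
  -- continuity of the four cosine functionals
  have cx : Continuous (fun θ : EuclideanSpace ℝ (Fin 4) =>
      Real.cos ((θ 0 + θ 1 - θ 2 - θ 3)/2)) := by fun_prop
  have cy : Continuous (fun θ : EuclideanSpace ℝ (Fin 4) =>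
      Real.cos ((θ 0 + θ 2 - θ 1 - θ 3)/2)) := by fun_prop
  have cz : Continuous (fun θ : EuclideanSpace ℝ (Fin 4) =>
      Real.cos ((θ 0 + θ 3 - θ 1 - θ 2)/2)) := by fun_prop
  have ct : Continuous (fun θ : EuclideanSpace ℝ (Fin 4) =>
      Real.cos ((θ 0 + θ 1 + θ 2 + θ 3)/2)^2) := by fun_prop
  -- values at the base point
  have vx : Real.cos ((θ₀ 0 + θ₀ 1 - θ₀ 2 - θ₀ 3)/2) = -1 := by
    rw [hθ0, hθ1, hθ2, hθ3, show ((0:ℝ) + π/2 - π - 3*π/2)/2 = -π by ring,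
      Real.cos_neg, Real.cos_pi]
  have vy : Real.cos ((θ₀ 0 + θ₀ 2 - θ₀ 1 - θ₀ 3)/2) = 0 := by
    rw [hθ0, hθ1, hθ2, hθ3, show ((0:ℝ) + π - π/2 - 3*π/2)/2 = -(π/2) by ring,
      Real.cos_neg, Real.cos_pi_div_two]
  have vz : Real.cos ((θ₀ 0 + θ₀ 3 - θ₀ 1 - θ₀ 2)/2) = 1 := by
    rw [hθ0, hθ1, hθ2, hθ3, show ((0:ℝ) + 3*π/2 - π/2 - π)/2 = 0 by ring, Real.cos_zero]
  have vt : Real.cos ((θ₀ 0 + θ₀ 1 + θ₀ 2 + θ₀ 3)/2)^2 = 0 := by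
    rw [hθ0, hθ1, hθ2, hθ3, show ((0:ℝ) + π/2 + π + 3*π/2)/2 = 3*π/2 by ring, cos_3pi2]
    norm_num
  have E1 : ∀ᶠ θ in nhds θ₀, Real.cos ((θ 0 + θ 1 - θ 2 - θ 3)/2)
      < Real.cos ((θ 0 + θ 2 - θ 1 - θ 3)/2) :=
    ContinuousAt.eventually_lt cx.continuousAt cy.continuousAt (by rw [vx, vy]; norm_num)
  have E2 : ∀ᶠ θ in nhds θ₀, Real.cos ((θ 0 + θ 2 - θ 1 - θ 3)/2)
      < Real.cos ((θ 0 + θ 3 - θ 1 - θ 2)/2) :=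
    ContinuousAt.eventually_lt cy.continuousAt cz.continuousAt (by rw [vy, vz]; norm_num)
  have E3 : ∀ᶠ θ in nhds θ₀, Real.cos ((θ 0 + θ 1 - θ 2 - θ 3)/2) < 0 :=
    ContinuousAt.eventually_lt cx.continuousAt continuousAt_const (by rw [vx]; norm_num)
  have E4 : ∀ᶠ θ in nhds θ₀, (0:ℝ) < Real.cos ((θ 0 + θ 3 - θ 1 - θ 2)/2) :=
    ContinuousAt.eventually_lt continuousAt_const cz.continuousAt (by rw [vz]; norm_num)
  have E5 : ∀ᶠ θ in nhds θ₀, Real.cos ((θ 0 + θ 1 + θ 2 + θ 3)/2)^2 < 1/2 :=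
    ContinuousAt.eventually_lt ct.continuousAt continuousAt_const (by rw [vt]; norm_num)
  filter_upwards [E1, E2, E3, E4, E5] with θ a1 a2 a3 a4 a5
  rw [hval]
  exact main_bound_aux ε hε0 hε1 θ a1.le a2.le a3 a4 a5
end
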